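/- Let S be a countable set, P an irreducible stochastic matrix, ρ ∈ ℝ, c : S → ℝ, and ψ₁, ψ₂ : S → ℝ strictly positive functions both satisfying e^ρ ψ(i) = e^{c(i)} ∑_j P(i,j) ψ(j) for all i ∈ S. Suppose in addition ψ₁ − k·ψ₂ ≥ 0 on S where k = inf_i ψ₁(i)/ψ₂(i) is attained at some i₀ ∈ S. Then ψ₁ = k·ψ₂, i.e., the eigenfunction is unique up to a positive multiplicative constant. -/

import Mathlib

open Classical in
/-- `n`-step transition matrix of the kernel `P`. -/
noncomputable def matPow {S : Type*} (P : S → S → ℝ) : ℕ → S → S → ℝ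
  | 0 => fun i j => if i = j then 1 else 0
  | n + 1 => fun i j => ∑' k, P i k * matPow P n k j

lemma matPow_nonneg {S : Type*} (P : S → S → ℝ) (hP0 : ∀ i j, 0 ≤ P i j) :
    ∀ n i j, 0 ≤ matPow P n i j := by
  intro n
  induction n with
  | zero => intro i j; simp only [matPow]; split <;> norm_num
  | succ n ih =>
      intro i j
      simp only [matPow]
      exact tsum_nonneg fun l => mul_nonneg (hP0 i l) (ih l j)

/-- Uniqueness (up to a positive multiplicative constant) of a positive eigenfunction of
the twisted kernel `e^{c(i)} ∑_j P(i,j) ψ(j) = e^ρ ψ(i)` on an irreducible chain, when the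
infimum `k` of `ψ₁/ψ₂` is attained. -/
theorem twisted_eigenfunction_unique
    {S : Type*} [Countable S] (P : S → S → ℝ)
    (hP0 : ∀ i j, 0 ≤ P i j) (hP1 : ∀ i, HasSum (P i) 1)
    (hirr : ∀ i j : S, ∃ n : ℕ, 1 ≤ n ∧ 0 < matPow P n i j)
    (ρ : ℝ) (c : S → ℝ) (ψ₁ ψ₂ : S → ℝ)
    (hψ₁pos : ∀ i, 0 < ψ₁ i) (hψ₂pos : ∀ i, 0 < ψ₂ i)
    (hsum₁ : ∀ i, Summable fun j => P i j * ψ₁ j)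
    (hsum₂ : ∀ i, Summable fun j => P i j * ψ₂ j)
    (heig₁ : ∀ i, Real.exp ρ * ψ₁ i = Real.exp (c i) * ∑' j, P i j * ψ₁ j)
    (heig₂ : ∀ i, Real.exp ρ * ψ₂ i = Real.exp (c i) * ∑' j, P i j * ψ₂ j)
    (k : ℝ) (i₀ : S)
    (hk : ∀ i, k ≤ ψ₁ i / ψ₂ i) (hk₀ : ψ₁ i₀ / ψ₂ i₀ = k)
    (hnonneg : ∀ i, 0 ≤ ψ₁ i - k * ψ₂ i) :
    ∀ i, ψ₁ i = k * ψ₂ i := by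
  set φ : S → ℝ := fun i => ψ₁ i - k * ψ₂ i with hφ
  have hφ0 : ∀ i, 0 ≤ φ i := hnonneg
  have hφsum : ∀ i, Summable fun j => P i j * φ j := by
    intro i
    have : (fun j => P i j * φ j)
        = fun j => P i j * ψ₁ j - k * (P i j * ψ₂ j) := by
      funext j; simp only [hφ]; ring
    rw [this]
    exact (hsum₁ i).sub ((hsum₂ i).mul_left k)
  have htsum : ∀ i, ∑' j, P i j * φ j
      = (∑' j, P i j * ψ₁ j) - k * ∑' j, P i j * ψ₂ j := by
    intro i
    have h1 : ∑' j, P i j * φ j = ∑' j, (P i j * ψ₁ j - k * (P i j * ψ₂ j)) := by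
      apply tsum_congr; intro j; simp only [hφ]; ring
    rw [h1, Summable.tsum_sub (hsum₁ i) ((hsum₂ i).mul_left k), tsum_mul_left]
  have heigφ : ∀ i, Real.exp ρ * φ i = Real.exp (c i) * ∑' j, P i j * φ j := by
    intro i
    rw [htsum i]
    simp only [hφ]
    linear_combination (heig₁ i) - k * (heig₂ i)
  have hZ : ∀ i, φ i = 0 → ∀ j, 0 < P i j → φ j = 0 := by
    intro i hi j hj
    have hsum0 : ∑' j, P i j * φ j = 0 := by
      have := heigφ i
      rw [hi, mul_zero] at this
      have hexp : Real.exp (c i) ≠ 0 := (Real.exp_pos _).ne'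
      field_simp at this
      exact (mul_eq_zero.mp this.symm).resolve_left hexp
    have hle : P i j * φ j ≤ 0 := by
      rw [← hsum0]
      exact Summable.le_tsum (hφsum i) j fun l _ => mul_nonneg (hP0 i l) (hφ0 l)
    have hge : 0 ≤ P i j * φ j := mul_nonneg (hP0 i j) (hφ0 j)
    have : P i j * φ j = 0 := le_antisymm hle hge
    rcases mul_eq_zero.mp this with h | h
    · exact absurd h hj.ne'
    · exact h
  have hstep : ∀ n (i j : S), φ i = 0 → 0 < matPow P n i j → φ j = 0 := by
    intro n
    induction n with
    | zero =>
        intro i j hi hpos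
        simp only [matPow] at hpos
        by_cases h : i = j
        · exact h ▸ hi
        · simp [h] at hpos
    | succ n ih =>
        intro i j hi hpos
        simp only [matPow] at hpos
        have hex : ∃ l, 0 < P i l * matPow P n l j := by
          by_contra h
          push_neg at h
          have : ∑' l, P i l * matPow P n l j ≤ 0 := tsum_nonpos h
          linarith
        obtain ⟨l, hl⟩ := hex
        have hPl : 0 < P i l := by
          rcases mul_pos_iff.mp hl with ⟨h1, _⟩ | ⟨h1, h2⟩
          · exact h1
          · exact absurd h2 (not_lt.mpr (matPow_nonneg P hP0 n l j))
        have hMl : 0 < matPow P n l j := by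
          rcases mul_pos_iff.mp hl with ⟨_, h2⟩ | ⟨h1, _⟩
          · exact h2
          · exact absurd h1 (not_lt.mpr (hP0 i l))
        exact ih l j (hZ i hi l hPl) hMl
  have hφi₀ : φ i₀ = 0 := by
    have h2 : ψ₂ i₀ ≠ 0 := (hψ₂pos i₀).ne'
    have : ψ₁ i₀ = k * ψ₂ i₀ := by
      field_simp at hk₀
      linarith [hk₀]
    simp [hφ, this]
  intro i
  obtain ⟨n, -, hpos⟩ := hirr i₀ i
  have := hstep n i₀ i hφi₀ hpos
  simpa [hφ, sub_eq_zero] using this
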